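/- (Exact version of Proposition 5, NIS mutual-information computation.) Let (Ω, μ) be a probability space, S, U, V, T finite nonempty measurable spaces with measurable singletons, ψ : S ≃ U × V a bijection (measurable with measurable inverse), X : Ω → S and Y : Ω → T measurable. Define A := ω ↦ (ψ (X ω)).1 and B := ω ↦ (ψ (X ω)).2. Assume that A is independent of the pair ⟨B, Y⟩, and that H[Y | B] = 0 and H[B | Y] = 0 (the intermediate representation B exactly captures Y). Then H[B] = I[X : Y] and H[A] = H[X | Y]. -/
import Mathlib


open MeasureTheory ProbabilityTheory Real

/-- Shannon entropy (natural logarithm) of a random variable `X : Ω → S`: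
`H[X] = ∑ₓ -P(X = x) log P(X = x)`. -/
noncomputable def entropy {Ω S : Type*} [MeasurableSpace Ω] [MeasurableSpace S]
    (μ : Measure Ω) (X : Ω → S) : ℝ :=
  ∑' x : S, Real.negMulLog (μ (X ⁻¹' {x})).toReal

/-- Conditional Shannon entropy `H[X|Y] = ∑_y P(Y = y) · H[X ; μ conditioned on Y = y]`. -/
noncomputable def condEntropy {Ω S T : Type*} [MeasurableSpace Ω] [MeasurableSpace S]
    [MeasurableSpace T] (μ : Measure Ω) (X : Ω → S) (Y : Ω → T) : ℝ :=
  ∑' y : T, (μ (Y ⁻¹' {y})).toReal * entropy (μ[|Y ⁻¹' {y}]) X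

/-- Mutual information `I[X:Y] = H[X] + H[Y] − H[⟨X,Y⟩]`. -/
noncomputable def mutualInfo {Ω S T : Type*} [MeasurableSpace Ω] [MeasurableSpace S]
    [MeasurableSpace T] (μ : Measure Ω) (X : Ω → S) (Y : Ω → T) : ℝ :=
  entropy μ X + entropy μ Y - entropy μ (fun ω => (X ω, Y ω))

/-- Conditional mutual information
`I[X:Y|Z] = H[⟨X,Z⟩] + H[⟨Y,Z⟩] − H[⟨⟨X,Y⟩,Z⟩] − H[Z]`. -/
noncomputable def condMutualInfo {Ω S T W : Type*} [MeasurableSpace Ω] [MeasurableSpace S]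
    [MeasurableSpace T] [MeasurableSpace W] (μ : Measure Ω)
    (X : Ω → S) (Y : Ω → T) (Z : Ω → W) : ℝ :=
  entropy μ (fun ω => (X ω, Z ω)) + entropy μ (fun ω => (Y ω, Z ω))
    - entropy μ (fun ω => ((X ω, Y ω), Z ω)) - entropy μ Z

lemma entropy_eq_sum {Ω S : Type*} [MeasurableSpace Ω] [Fintype S] [MeasurableSpace S]
    (μ : Measure Ω) (X : Ω → S) :
    entropy μ X = ∑ x : S, Real.negMulLog (μ (X ⁻¹' {x})).toReal := tsum_fintype _

lemma sum_prob_eq_one {Ω S : Type*} [MeasurableSpace Ω] [Fintype S] [MeasurableSpace S]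
    [MeasurableSingletonClass S] (μ : Measure Ω) [IsProbabilityMeasure μ]
    {X : Ω → S} (hX : Measurable X) :
    ∑ x : S, (μ (X ⁻¹' {x})).toReal = 1 := by
  have h : ∑ x : S, μ (X ⁻¹' {x}) = μ Set.univ := by
    rw [← measure_biUnion_finset]
    · congr 1
      ext ω; simp
    · intro i _ j _ hij
      exact Set.disjoint_left.2 fun ω h1 h2 => hij (by simpa using h1.symm.trans h2)
    · intro i _; exact hX (measurableSet_singleton i)
  rw [← ENNReal.toReal_sum (fun x _ => measure_ne_top μ _), h, measure_univ, ENNReal.toReal_one]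

lemma entropy_comp_equiv {Ω S S' : Type*} [MeasurableSpace Ω] [Fintype S] [Fintype S']
    [MeasurableSpace S] [MeasurableSpace S'] (μ : Measure Ω) (X : Ω → S) (e : S ≃ S') :
    entropy μ (fun ω => e (X ω)) = entropy μ X := by
  rw [entropy_eq_sum, entropy_eq_sum, ← e.symm.sum_comp]
  refine Fintype.sum_congr _ _ fun x' => ?_
  have hset : (fun ω => e (X ω)) ⁻¹' {x'} = X ⁻¹' {e.symm x'} := by
    ext ω; simp [Equiv.apply_eq_iff_eq_symm_apply]
  rw [hset]

lemma entropy_pair_of_indep {Ω S T : Type*} [MeasurableSpace Ω] [Fintype S] [Fintype T]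
    [MeasurableSpace S] [MeasurableSpace T] [MeasurableSingletonClass S]
    [MeasurableSingletonClass T] (μ : Measure Ω) [IsProbabilityMeasure μ]
    {X : Ω → S} {Y : Ω → T} (hX : Measurable X) (hY : Measurable Y)
    (h : IndepFun X Y μ) :
    entropy μ (fun ω => (X ω, Y ω)) = entropy μ X + entropy μ Y := by
  rw [entropy_eq_sum, Fintype.sum_prod_type]
  have key : ∀ (x : S) (y : T),
      (μ ((fun ω => (X ω, Y ω)) ⁻¹' {(x, y)})).toReal
        = (μ (X ⁻¹' {x})).toReal * (μ (Y ⁻¹' {y})).toReal := by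
    intro x y
    have : (fun ω => (X ω, Y ω)) ⁻¹' {(x, y)} = X ⁻¹' {x} ∩ Y ⁻¹' {y} := by
      ext ω; simp [Prod.ext_iff]
    rw [this, h.measure_inter_preimage_eq_mul _ _ (measurableSet_singleton x)
      (measurableSet_singleton y), ENNReal.toReal_mul]
  calc ∑ x : S, ∑ y : T, Real.negMulLog (μ ((fun ω => (X ω, Y ω)) ⁻¹' {(x, y)})).toReal
      = ∑ x : S, ∑ y : T, ((μ (Y ⁻¹' {y})).toReal * Real.negMulLog (μ (X ⁻¹' {x})).toReal
          + (μ (X ⁻¹' {x})).toReal * Real.negMulLog (μ (Y ⁻¹' {y})).toReal) := by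
        simp_rw [key, Real.negMulLog_mul]
    _ = ∑ x : S, (Real.negMulLog (μ (X ⁻¹' {x})).toReal
          + (μ (X ⁻¹' {x})).toReal * ∑ y : T, Real.negMulLog (μ (Y ⁻¹' {y})).toReal) := by
        refine Fintype.sum_congr _ _ fun x => ?_
        rw [Finset.sum_add_distrib, ← Finset.sum_mul, sum_prob_eq_one μ hY, one_mul,
          ← Finset.mul_sum]
    _ = entropy μ X + entropy μ Y := by
        rw [Finset.sum_add_distrib, ← Finset.sum_mul, sum_prob_eq_one μ hX, one_mul,
          entropy_eq_sum, entropy_eq_sum]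

lemma chain_rule {Ω S T : Type*} [MeasurableSpace Ω] [Fintype S] [Fintype T]
    [MeasurableSpace S] [MeasurableSpace T] [MeasurableSingletonClass S]
    [MeasurableSingletonClass T] (μ : Measure Ω) [IsProbabilityMeasure μ]
    {X : Ω → S} {Y : Ω → T} (hX : Measurable X) (hY : Measurable Y) :
    entropy μ (fun ω => (X ω, Y ω)) = entropy μ Y + condEntropy μ X Y := by
  have hmy : ∀ y : T, MeasurableSet (Y ⁻¹' {y}) := fun y => hY (measurableSet_singleton y)
  rw [entropy_eq_sum, Fintype.sum_prod_type_right, entropy_eq_sum, condEntropy, tsum_fintype,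
    ← Finset.sum_add_distrib]
  congr 1; ext y
  by_cases h0 : μ (Y ⁻¹' {y}) = 0
  · have hz : ∀ x : S, μ ((fun ω => (X ω, Y ω)) ⁻¹' {(x, y)}) = 0 := by
      intro x
      refine measure_mono_null ?_ h0
      intro ω; simp +contextual [Prod.ext_iff]
    simp [hz, h0, Real.negMulLog_zero]
  · have : IsProbabilityMeasure (μ[|Y ⁻¹' {y}]) := cond_isProbabilityMeasure h0
    have hpt : (μ (Y ⁻¹' {y})).toReal ≠ 0 := by
      simp [ENNReal.toReal_eq_zero_iff, h0, measure_ne_top]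
    have key : ∀ x : S, (μ ((fun ω => (X ω, Y ω)) ⁻¹' {(x, y)})).toReal
        = (μ (Y ⁻¹' {y})).toReal * ((μ[|Y ⁻¹' {y}]) (X ⁻¹' {x})).toReal := by
      intro x
      rw [cond_apply (hmy y), ENNReal.toReal_mul, ENNReal.toReal_inv, ← mul_assoc,
        mul_inv_cancel₀ hpt, one_mul]
      congr 2
      ext ω; simp [Prod.ext_iff, and_comm]
    calc ∑ x : S, Real.negMulLog (μ ((fun ω => (X ω, Y ω)) ⁻¹' {(x, y)})).toReal
        = ∑ x : S, (((μ[|Y ⁻¹' {y}]) (X ⁻¹' {x})).toReal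
              * Real.negMulLog (μ (Y ⁻¹' {y})).toReal
            + (μ (Y ⁻¹' {y})).toReal
              * Real.negMulLog ((μ[|Y ⁻¹' {y}]) (X ⁻¹' {x})).toReal) := by
          simp_rw [key, Real.negMulLog_mul]
      _ = Real.negMulLog (μ (Y ⁻¹' {y})).toReal
          + (μ (Y ⁻¹' {y})).toReal * entropy (μ[|Y ⁻¹' {y}]) X := by
          rw [Finset.sum_add_distrib, ← Finset.sum_mul, ← Finset.mul_sum,
            sum_prob_eq_one _ hX, one_mul, entropy_eq_sum]

/-- exact NIS mutual-information computation: if the invertible encoder `ψ`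
splits `X` into noise `A` and representation `B` with `A` independent of `⟨B,Y⟩`,
`H[Y|B] = 0` and `H[B|Y] = 0`, then `H[B] = I[X:Y]` and `H[A] = H[X|Y]`. -/
theorem nis_mutual_information {Ω S U V T : Type*} [MeasurableSpace Ω]
    [Fintype S] [Nonempty S] [MeasurableSpace S] [MeasurableSingletonClass S]
    [Fintype U] [Nonempty U] [MeasurableSpace U] [MeasurableSingletonClass U]
    [Fintype V] [Nonempty V] [MeasurableSpace V] [MeasurableSingletonClass V]
    [Fintype T] [Nonempty T] [MeasurableSpace T] [MeasurableSingletonClass T]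
    (μ : Measure Ω) [IsProbabilityMeasure μ]
    (ψ : S ≃ U × V) (hψ : Measurable ψ) (hψ' : Measurable ψ.symm)
    (X : Ω → S) (Y : Ω → T) (hX : Measurable X) (hY : Measurable Y)
    (A : Ω → U) (B : Ω → V)
    (hA : A = fun ω => (ψ (X ω)).1) (hB : B = fun ω => (ψ (X ω)).2)
    (hindep : IndepFun A (fun ω => (B ω, Y ω)) μ)
    (hYB : condEntropy μ Y B = 0) (hBY : condEntropy μ B Y = 0) :
    entropy μ B = mutualInfo μ X Y ∧ entropy μ A = condEntropy μ X Y := by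
  have hAm : Measurable A := by rw [hA]; exact measurable_fst.comp (hψ.comp hX)
  have hBm : Measurable B := by rw [hB]; exact measurable_snd.comp (hψ.comp hX)
  have hBYm : Measurable (fun ω => (B ω, Y ω)) := hBm.prodMk hY
  -- H[X] = H[A] + H[B]
  have hindepAB : IndepFun A B μ := by
    have := hindep.comp (measurable_id (α := U)) (measurable_fst (α := V) (β := T))
    exact this
  have hXAB : entropy μ X = entropy μ A + entropy μ B := by
    rw [← entropy_comp_equiv μ X ψ]
    have : (fun ω => ψ (X ω)) = fun ω => (A ω, B ω) := by
      funext ω; rw [hA, hB]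
    rw [this, entropy_pair_of_indep μ hAm hBm hindepAB]
  -- H[⟨X,Y⟩] = H[A] + H[⟨B,Y⟩]
  have hXYsplit : entropy μ (fun ω => (X ω, Y ω))
      = entropy μ A + entropy μ (fun ω => (B ω, Y ω)) := by
    rw [← entropy_comp_equiv μ (fun ω => (X ω, Y ω))
      ((ψ.prodCongr (Equiv.refl T)).trans (Equiv.prodAssoc U V T))]
    have : (fun ω => ((ψ.prodCongr (Equiv.refl T)).trans (Equiv.prodAssoc U V T)) (X ω, Y ω))
        = fun ω => (A ω, (B ω, Y ω)) := by
      funext ω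
      simp [hA, hB, Equiv.prodCongr, Equiv.prodAssoc]
    rw [this, entropy_pair_of_indep μ hAm hBYm hindep]
  -- chain rules
  have hcBY : entropy μ (fun ω => (B ω, Y ω)) = entropy μ Y := by
    rw [chain_rule μ hBm hY, hBY, add_zero]
  have hcYB : entropy μ (fun ω => (B ω, Y ω)) = entropy μ B := by
    have h1 : entropy μ (fun ω => (Y ω, B ω)) = entropy μ B := by
      rw [chain_rule μ hY hBm, hYB, add_zero]
    rw [← h1, ← entropy_comp_equiv μ (fun ω => (B ω, Y ω)) (Equiv.prodComm V T)]
    rfl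
  have hcXY : entropy μ (fun ω => (X ω, Y ω)) = entropy μ Y + condEntropy μ X Y :=
    chain_rule μ hX hY
  constructor
  · rw [mutualInfo, hXAB, hXYsplit, hcBY]; ring
  · have := hcXY
    rw [hXYsplit, hcBY] at this
    linarith
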